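/- arXiv:1811.10854 — 5 statements merged into one kernel-verified Lean document; each statement's English description precedes it below -/
import Mathlib

section
/- In a sharply 2-transitive permutation group, all involutions are conjugate. -/
def SharplyTwoTransitive (G X : Type*) [Group G] [MulAction G X] : Prop :=
  ∀ x y x' y' : X, x ≠ y → x' ≠ y' → ∃! g : G, g • x = x' ∧ g • y = y'

lemma moves_of_involution {G X : Type*} [Group G] [MulAction G X]
    (hX : ∃ x y : X, x ≠ y) (h2 : SharplyTwoTransitive G X)
    {i : G} (hi : orderOf i = 2) : ∃ x : X, i • x ≠ x := by
  by_contra h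
  push_neg at h
  obtain ⟨a, b, hab⟩ := hX
  obtain ⟨g, hg, hu⟩ := h2 a b a b hab hab
  have h1 : i = g := hu i ⟨h a, h b⟩
  have h2' : (1 : G) = g := hu 1 ⟨one_smul _ _, one_smul _ _⟩
  have : i = 1 := h1.trans h2'.symm
  rw [this, orderOf_one] at hi
  omega

/-- In a sharply 2-transitive permutation group, all involutions are conjugate. -/
theorem stmt_1 {G X : Type*} [Group G] [MulAction G X]
    (hX : ∃ x y : X, x ≠ y) (h2 : SharplyTwoTransitive G X) :
    ∀ i j : G, orderOf i = 2 → orderOf j = 2 → IsConj i j := by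
  intro i j hi hj
  have hi2 : i * i = 1 := by
    have := pow_orderOf_eq_one i; rwa [hi, pow_two] at this
  have hj2 : j * j = 1 := by
    have := pow_orderOf_eq_one j; rwa [hj, pow_two] at this
  obtain ⟨x, hx⟩ := moves_of_involution hX h2 hi
  obtain ⟨y, hy⟩ := moves_of_involution hX h2 hj
  obtain ⟨g, ⟨hg1, hg2⟩, _⟩ := h2 x (i • x) y (j • y) (Ne.symm hx) (Ne.symm hy)
  obtain ⟨k, _, hu⟩ := h2 y (j • y) (j • y) y (Ne.symm hy) hy
  have hjk : j = k := hu j ⟨rfl, by rw [smul_smul, hj2, one_smul]⟩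
  have hck : g * i * g⁻¹ = k := by
    apply hu
    constructor
    · rw [mul_smul, mul_smul, ← hg1, inv_smul_smul, hg1, hg2]
    · rw [← hg2, mul_smul, mul_smul, inv_smul_smul,
        show i • i • x = x from by rw [smul_smul, hi2, one_smul], hg1]
  rw [isConj_iff]
  exact ⟨g, hck.trans hjk.symm⟩
end

section
/- In a near-field of characteristic 0, every element of the prime field (the image of the rationals) lies in the kernel, i.e., is left-distributive: for n a natural-number multiple of 1 and m a nonzero such multiple, the element m⁻¹·n satisfies (y+z)·(m⁻¹n) = y·(m⁻¹n) + z·(m⁻¹n) for all y, z. -/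
/-- A near-field: a skew field except that the distributive law
\`(y+z)*x = y*x + z*x\` need not hold (it holds only for \`x\` in the kernel). -/
class NearField (K : Type*) extends AddCommGroup K, One K, Mul K, Inv K where
  mul_assoc : ∀ a b c : K, a * b * c = a * (b * c)
  one_mul : ∀ a : K, 1 * a = a
  mul_one : ∀ a : K, a * 1 = a
  zero_mul : ∀ a : K, (0 : K) * a = 0
  mul_zero : ∀ a : K, a * 0 = 0
  mul_inv_cancel : ∀ a : K, a ≠ 0 → a * a⁻¹ = 1
  inv_mul_cancel : ∀ a : K, a ≠ 0 → a⁻¹ * a = 1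
  distrib : ∀ a b c : K, a * (b + c) = a * b + a * c
  one_ne_zero : (1 : K) ≠ 0

/-- The kernel of a near-field: the elements with respect to which
multiplication is left distributive. -/
def NearField.ker (K : Type*) [NearField K] : Set K :=
  {x : K | ∀ y z : K, (y + z) * x = y * x + z * x}

private lemma nf_mul_nsmul_one {K : Type*} [NearField K] (a : K) (k : ℕ) :
    a * (k • (1 : K)) = k • a := by
  induction k with
  | zero => simpa using NearField.mul_zero a
  | succ k ih =>
      rw [succ_nsmul, succ_nsmul, NearField.distrib, ih, NearField.mul_one]

private lemma nf_nsmul_one_ker {K : Type*} [NearField K] (k : ℕ) (y z : K) :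
    (y + z) * (k • (1 : K)) = y * (k • (1 : K)) + z * (k • (1 : K)) := by
  rw [nf_mul_nsmul_one, nf_mul_nsmul_one, nf_mul_nsmul_one, smul_add]

private lemma nf_inv_ker {K : Type*} [NearField K] {x : K} (hx : x ≠ 0)
    (h : ∀ y z : K, (y + z) * x = y * x + z * x) (y z : K) :
    (y + z) * x⁻¹ = y * x⁻¹ + z * x⁻¹ := by
  have key : (y * x⁻¹ + z * x⁻¹) * x = y + z := by
    rw [h, NearField.mul_assoc, NearField.mul_assoc, NearField.inv_mul_cancel x hx,
      NearField.mul_one, NearField.mul_one]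
  calc (y + z) * x⁻¹ = ((y * x⁻¹ + z * x⁻¹) * x) * x⁻¹ := by rw [key]
    _ = y * x⁻¹ + z * x⁻¹ := by
        rw [NearField.mul_assoc, NearField.mul_inv_cancel x hx, NearField.mul_one]

/-- In a near-field of characteristic 0, every element m⁻¹·n of the prime field
lies in the kernel. -/
theorem stmt_6 {K : Type*} [NearField K]
    (hchar : ∀ k : ℕ, k ≠ 0 → (k • (1 : K)) ≠ 0) :
    ∀ (n m : ℕ), m ≠ 0 →
      ∀ y z : K, (y + z) * ((m • (1 : K))⁻¹ * (n • (1 : K))) =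
        y * ((m • (1 : K))⁻¹ * (n • (1 : K))) + z * ((m • (1 : K))⁻¹ * (n • (1 : K))) := by
  intro n m hm y z
  have hinv := nf_inv_ker (hchar m hm) (fun y z => nf_nsmul_one_ker m y z)
  rw [← NearField.mul_assoc, ← NearField.mul_assoc, ← NearField.mul_assoc,
    hinv y z, nf_nsmul_one_ker]
end

section
/- If G acts sharply 2-transitively on X and N is a normal subgroup of G intersecting the point stabilizer B = Stab_G(x) trivially and with N ≠ {1}, then N acts regularly on X and G = N ⋊ B (i.e., G = NB and N ∩ B = {1}). -/
/-- If G is sharply 2-transitive on X and N is a nontrivial normal subgroup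
meeting the point stabilizer B trivially, then N is regular on X and G = N ⋊ B. -/
theorem stmt_12 {G X : Type*} [Group G] [MulAction G X]
    (hX : ∃ x y : X, x ≠ y) (h2 : SharplyTwoTransitive G X)
    (x : X) (N : Subgroup G) (hN : N.Normal)
    (hNB : N ⊓ MulAction.stabilizer G x = ⊥) (hNne : N ≠ ⊥) :
    (∀ p q : X, ∃! n : G, n ∈ N ∧ n • p = q) ∧
    (∀ g : G, ∃ n ∈ N, ∃ b ∈ MulAction.stabilizer G x, g = n * b) := by
  have htrans : ∀ p q : X, ∃ g : G, g • p = q := by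
    intro p q
    by_cases h : p = q
    · exact ⟨1, by simp [h]⟩
    · obtain ⟨g, ⟨hg1, _⟩, _⟩ := h2 p q q p h (Ne.symm h)
      exact ⟨g, hg1⟩
  have hfree : ∀ n ∈ N, ∀ p : X, n • p = p → n = 1 := by
    intro n hn p hp
    obtain ⟨g, hg⟩ := htrans x p
    have hm : g⁻¹ * n * g ∈ N := by
      simpa using hN.conj_mem n hn g⁻¹
    have hms : g⁻¹ * n * g ∈ MulAction.stabilizer G x := by
      simp [MulAction.mem_stabilizer_iff, mul_smul, hg, hp, inv_smul_eq_iff]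
    have hbot : g⁻¹ * n * g ∈ (⊥ : Subgroup G) := hNB ▸ ⟨hm, hms⟩
    have h1 : g⁻¹ * n * g = 1 := Subgroup.mem_bot.mp hbot
    have h2' : n = g * (g⁻¹ * n * g) * g⁻¹ := by group
    rw [h1] at h2'
    simpa using h2'
  obtain ⟨n₀, hn₀N, hn₀⟩ : ∃ n₀ ∈ N, n₀ ≠ 1 := by
    by_contra hc
    push_neg at hc
    exact hNne (Subgroup.eq_bot_iff_forall N |>.mpr hc)
  have hNtrans : ∀ p q : X, ∃ n ∈ N, n • p = q := by
    intro p q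
    by_cases h : p = q
    · exact ⟨1, N.one_mem, by simp [h]⟩
    · have hmove : n₀ • p ≠ p := fun hcc => hn₀ (hfree n₀ hn₀N p hcc)
      obtain ⟨g, ⟨hg1, hg2⟩, _⟩ := h2 p (n₀ • p) p q (Ne.symm hmove) h
      refine ⟨g * n₀ * g⁻¹, hN.conj_mem n₀ hn₀N g, ?_⟩
      have hgp : g⁻¹ • p = p := by rw [inv_smul_eq_iff, hg1]
      rw [mul_smul, mul_smul, hgp, hg2]
  constructor
  · intro p q
    obtain ⟨n, hnN, hnpq⟩ := hNtrans p q
    refine ⟨n, ⟨hnN, hnpq⟩, ?_⟩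
    rintro m ⟨hmN, hmpq⟩
    have h1 : (n⁻¹ * m) • p = p := by
      rw [mul_smul, hmpq, inv_smul_eq_iff, hnpq]
    have := hfree _ (N.mul_mem (N.inv_mem hnN) hmN) p h1
    exact (inv_mul_eq_one.mp this).symm
  · intro g
    obtain ⟨n, hnN, hnx⟩ := hNtrans x (g • x)
    refine ⟨n, hnN, n⁻¹ * g, ?_, by group⟩
    simp [MulAction.mem_stabilizer_iff, mul_smul, ← hnx]
end

section
/- In a sharply 2-transitive permutation group in which point stabilizers contain involutions, any two distinct involutions have product of the same order; more precisely, all products ij of distinct involutions i ≠ j are conjugate in G. -/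
section Aux

variable {G X : Type*} [Group G] [MulAction G X]

private lemma fix2_eq_one (h2 : SharplyTwoTransitive G X) {g : G} {u v : X}
    (huv : u ≠ v) (hu : g • u = u) (hv : g • v = v) : g = 1 :=
  (h2 u v u v huv huv).unique ⟨hu, hv⟩ ⟨one_smul _ _, one_smul _ _⟩

private lemma swap_unique (h2 : SharplyTwoTransitive G X) {u v : X} (huv : u ≠ v)
    {p q : G} (hp1 : p • u = v) (hp2 : p • v = u) (hq1 : q • u = v) (hq2 : q • v = u) :
    p = q :=
  (h2 u v v u huv huv.symm).unique ⟨hp1, hp2⟩ ⟨hq1, hq2⟩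

private lemma exists_moved (hX : ∃ x y : X, x ≠ y) (h2 : SharplyTwoTransitive G X)
    {p : G} (hp : p ≠ 1) : ∃ u : X, p • u ≠ u := by
  obtain ⟨x1, x2, h12⟩ := hX
  by_contra h
  push_neg at h
  exact hp (fix2_eq_one h2 h12 (h x1) (h x2))

private lemma sq_smul {p : G} (hpp : p * p = 1) (u : X) : p • p • u = u := by
  rw [← mul_smul, hpp, one_smul]

/-- Every involution has a fixed point (given that one involution in a stabilizer exists). -/
private lemma inv_has_fix (hX : ∃ x y : X, x ≠ y) (h2 : SharplyTwoTransitive G X)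
    (hstab : ∃ (x : X) (i : G), orderOf i = 2 ∧ i • x = x)
    {p : G} (hp1 : p ≠ 1) (hpp : p * p = 1) : ∃ a : X, p • a = a := by
  obtain ⟨x₀, i₀, hi₀, hfix⟩ := hstab
  have hi1 : i₀ ≠ 1 := by
    intro h; rw [h, orderOf_one] at hi₀; exact absurd hi₀ (by norm_num)
  have hii : i₀ * i₀ = 1 := by
    have h := pow_orderOf_eq_one i₀
    rwa [hi₀, pow_two] at h
  obtain ⟨u, hu⟩ := exists_moved hX h2 hp1
  obtain ⟨w, hw⟩ := exists_moved hX h2 hi1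
  obtain ⟨g, ⟨hg1, hg2⟩, -⟩ := h2 u (p • u) w (i₀ • w) (Ne.symm hu) (Ne.symm hw)
  have hg1' : g⁻¹ • w = u := inv_smul_eq_iff.mpr hg1.symm
  have hg2' : g⁻¹ • (i₀ • w) = p • u := inv_smul_eq_iff.mpr hg2.symm
  have key : g * p * g⁻¹ = i₀ := by
    refine swap_unique h2 (Ne.symm hw) ?_ ?_ rfl (sq_smul hii w)
    · rw [mul_smul, mul_smul, hg1', hg2]
    · rw [mul_smul, mul_smul, hg2', sq_smul hpp, hg1]
  refine ⟨g⁻¹ • x₀, ?_⟩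
  have : (g * p * g⁻¹) • x₀ = x₀ := by rw [key, hfix]
  rw [mul_smul, mul_smul] at this
  calc p • g⁻¹ • x₀ = g⁻¹ • (g • (p • g⁻¹ • x₀)) := by rw [inv_smul_smul]
    _ = g⁻¹ • x₀ := by rw [this]

/-- Two involutions with a common fixed point are equal. -/
private lemma inv_fix_unique (hX : ∃ x y : X, x ≠ y) (h2 : SharplyTwoTransitive G X)
    {p q : G} (hp1 : p ≠ 1) (hpp : p * p = 1) (hq1 : q ≠ 1) (hqq : q * q = 1)
    {x : X} (hpx : p • x = x) (hqx : q • x = x) : p = q := by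
  by_contra hne
  -- a point different from x
  have hexu : ∃ u : X, u ≠ x := by
    obtain ⟨x1, x2, h12⟩ := hX
    by_cases h : x1 = x
    · exact ⟨x2, by rw [← h]; exact h12.symm⟩
    · exact ⟨x1, h⟩
  obtain ⟨u, hux⟩ := hexu
  have hpu : p • u ≠ u := fun h => hp1 (fix2_eq_one h2 hux h hpx)
  have hqu : q • u ≠ u := fun h => hq1 (fix2_eq_one h2 hux h hqx)
  have hxpu : x ≠ p • u := by
    intro h
    apply hux
    have : p • x = p • p • u := by rw [← h]
    rw [hpx, sq_smul hpp] at this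
    exact this.symm ▸ rfl
  have hpq : p • u ≠ q • u := by
    intro h
    exact hne ((h2 x u x (p • u) (Ne.symm hux) hxpu).unique ⟨hpx, rfl⟩ ⟨hqx, h.symm⟩)
  obtain ⟨h, ⟨hh1, hh2⟩, -⟩ := h2 u (p • u) u (q • u) (Ne.symm hpu) (Ne.symm hqu)
  have hh1' : h⁻¹ • u = u := inv_smul_eq_iff.mpr hh1.symm
  have hh2' : h⁻¹ • (q • u) = p • u := inv_smul_eq_iff.mpr hh2.symm
  have key : h * p * h⁻¹ = q := by
    refine swap_unique h2 (Ne.symm hqu) ?_ ?_ rfl (sq_smul hqq u)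
    · rw [mul_smul, mul_smul, hh1', hh2]
    · rw [mul_smul, mul_smul, hh2', sq_smul hpp, hh1]
  have hfixq : q • (h • x) = h • x := by
    rw [← key, mul_smul, mul_smul, inv_smul_smul, hpx]
  have hhx : h • x = x := by
    by_contra hne'
    exact hq1 (fix2_eq_one h2 hne' hfixq hqx)
  have hh_one : h = 1 := fix2_eq_one h2 hux hh1 hhx
  rw [hh_one, one_smul] at hh2
  exact hpq hh2

end Aux

/-- In a sharply 2-transitive group whose point stabilizers contain involutions,
all products of two distinct involutions are conjugate. -/
theorem stmt_13 {G X : Type*} [Group G] [MulAction G X]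
    (hX : ∃ x y : X, x ≠ y) (h2 : SharplyTwoTransitive G X)
    (hstab : ∃ (x : X) (i : G), orderOf i = 2 ∧ i • x = x) :
    ∀ i j i' j' : G, orderOf i = 2 → orderOf j = 2 → orderOf i' = 2 → orderOf j' = 2 →
      i ≠ j → i' ≠ j' → IsConj (i * j) (i' * j') := by
  intro i j i' j' hi hj hi' hj' hij hij'
  have hne1 : ∀ k : G, orderOf k = 2 → k ≠ 1 := by
    intro k hk h; rw [h, orderOf_one] at hk; exact absurd hk (by norm_num)
  have hsq : ∀ k : G, orderOf k = 2 → k * k = 1 := by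
    intro k hk
    have h := pow_orderOf_eq_one k
    rwa [hk, pow_two] at h
  obtain ⟨a, ha⟩ := inv_has_fix hX h2 hstab (hne1 i hi) (hsq i hi)
  obtain ⟨b, hb⟩ := inv_has_fix hX h2 hstab (hne1 j hj) (hsq j hj)
  obtain ⟨a', ha'⟩ := inv_has_fix hX h2 hstab (hne1 i' hi') (hsq i' hi')
  obtain ⟨b', hb'⟩ := inv_has_fix hX h2 hstab (hne1 j' hj') (hsq j' hj')
  have hab : a ≠ b := by
    intro h
    exact hij (inv_fix_unique hX h2 (hne1 i hi) (hsq i hi) (hne1 j hj) (hsq j hj)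
      ha (h ▸ hb))
  have hab' : a' ≠ b' := by
    intro h
    exact hij' (inv_fix_unique hX h2 (hne1 i' hi') (hsq i' hi') (hne1 j' hj') (hsq j' hj')
      ha' (h ▸ hb'))
  obtain ⟨g, ⟨hga, hgb⟩, -⟩ := h2 a b a' b' hab hab'
  have hconj_ne : ∀ k : G, k ≠ 1 → g * k * g⁻¹ ≠ 1 := by
    intro k hk h
    apply hk
    have : g⁻¹ * (g * k * g⁻¹) * g = g⁻¹ * 1 * g := by rw [h]
    calc k = g⁻¹ * (g * k * g⁻¹) * g := by group
      _ = g⁻¹ * 1 * g := this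
      _ = 1 := by group
  have hconj_sq : ∀ k : G, k * k = 1 → (g * k * g⁻¹) * (g * k * g⁻¹) = 1 := by
    intro k hk
    calc (g * k * g⁻¹) * (g * k * g⁻¹) = g * (k * k) * g⁻¹ := by group
      _ = 1 := by rw [hk]; group
  have hfixi : (g * i * g⁻¹) • a' = a' := by
    have hga' : g⁻¹ • a' = a := inv_smul_eq_iff.mpr hga.symm
    rw [mul_smul, mul_smul, hga', ha, hga]
  have hfixj : (g * j * g⁻¹) • b' = b' := by
    have hgb' : g⁻¹ • b' = b := inv_smul_eq_iff.mpr hgb.symm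
    rw [mul_smul, mul_smul, hgb', hb, hgb]
  have hci : g * i * g⁻¹ = i' :=
    inv_fix_unique hX h2 (hconj_ne i (hne1 i hi)) (hconj_sq i (hsq i hi))
      (hne1 i' hi') (hsq i' hi') hfixi ha'
  have hcj : g * j * g⁻¹ = j' :=
    inv_fix_unique hX h2 (hconj_ne j (hne1 j hj)) (hconj_sq j (hsq j hj))
      (hne1 j' hj') (hsq j' hj') hfixj hb'
  rw [isConj_iff]
  refine ⟨g, ?_⟩
  calc g * (i * j) * g⁻¹ = (g * i * g⁻¹) * (g * j * g⁻¹) := by group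
    _ = i' * j' := by rw [hci, hcj]
end

section
/- A near-domain whose additive loop is associative (i.e., whose addition makes it a group) is a near-field. -/
/-- A near-domain: additively a loop (with the reflection property), with a
group structure on the nonzero elements, right distributivity, and the
associativity-defect elements d_{a,b}. -/
class NearDomain (K : Type*) extends Zero K, Add K, One K, Mul K, Inv K where
  add_zero : ∀ a : K, a + 0 = a
  zero_add : ∀ a : K, 0 + a = a
  existsUnique_add_left : ∀ a b : K, ∃! x : K, a + x = b
  existsUnique_add_right : ∀ a b : K, ∃! x : K, x + a = b
  add_eq_zero_symm : ∀ a b : K, a + b = 0 → b + a = 0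
  mul_assoc : ∀ a b c : K, a * b * c = a * (b * c)
  one_mul : ∀ a : K, 1 * a = a
  mul_one : ∀ a : K, a * 1 = a
  zero_mul : ∀ a : K, (0 : K) * a = 0
  mul_zero : ∀ a : K, a * 0 = 0
  mul_inv_cancel : ∀ a : K, a ≠ 0 → a * a⁻¹ = 1
  inv_mul_cancel : ∀ a : K, a ≠ 0 → a⁻¹ * a = 1
  right_distrib : ∀ y z x : K, (y + z) * x = y * x + z * x
  one_ne_zero : (1 : K) ≠ 0
  exists_d : ∀ a b : K, ∃ d : K, d ≠ 0 ∧ ∀ x : K, a + (b + x) = (a + b) + d * x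

/-- If `g` is nonzero and commutes with `x`, then so does `g⁻¹`. -/
lemma nd_inv_comm {K : Type*} [NearDomain K] {g x : K} (hg : g ≠ 0)
    (h : g * x = x * g) : x * g⁻¹ = g⁻¹ * x := by
  calc x * g⁻¹ = g⁻¹ * (g * (x * g⁻¹)) := by
        rw [← NearDomain.mul_assoc, NearDomain.inv_mul_cancel g hg, NearDomain.one_mul]
    _ = g⁻¹ * x := by
        rw [← NearDomain.mul_assoc g x g⁻¹, h, NearDomain.mul_assoc,
          NearDomain.mul_inv_cancel g hg, NearDomain.mul_one]

/-- A near-domain whose addition is associative is a near-field: addition is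
then a commutative group. -/
theorem stmt_15 {K : Type*} [NearDomain K]
    (hassoc : ∀ a b c : K, a + b + c = a + (b + c)) :
    (∀ a b : K, a + b = b + a) ∧ (∀ a : K, ∃ b : K, a + b = 0) := by
  have az := NearDomain.add_zero (K := K)
  have za := NearDomain.zero_add (K := K)
  have rd := NearDomain.right_distrib (K := K)
  have zm := NearDomain.zero_mul (K := K)
  have mz := NearDomain.mul_zero (K := K)
  have om := NearDomain.one_mul (K := K)
  have m1 := NearDomain.mul_one (K := K)
  have ma := NearDomain.mul_assoc (K := K)
  -- cancellation
  have lcancel : ∀ a b c : K, a + b = a + c → b = c := by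
    intro a b c h
    obtain ⟨x, -, hu⟩ := NearDomain.existsUnique_add_left a (a + c)
    exact (hu b h).trans (hu c rfl).symm
  have rcancel : ∀ a b c : K, b + a = c + a → b = c := by
    intro a b c h
    obtain ⟨x, -, hu⟩ := NearDomain.existsUnique_add_right a (c + a)
    exact (hu b h).trans (hu c rfl).symm
  -- negation
  have hneg : ∀ a : K, ∃ b : K, a + b = 0 := fun a =>
    (NearDomain.existsUnique_add_left a 0).exists
  choose ng hn using hneg
  have hn' : ∀ a : K, ng a + a = 0 := fun a => NearDomain.add_eq_zero_symm _ _ (hn a)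
  have nuniq : ∀ a b : K, a + b = 0 → b = ng a := fun a b h =>
    lcancel a b (ng a) (h.trans (hn a).symm)
  have nn : ∀ a : K, ng (ng a) = a := fun a => (nuniq (ng a) a (hn' a)).symm
  have nar : ∀ a b : K, ng (a + b) = ng b + ng a := by
    intro a b
    have h : (a + b) + (ng b + ng a) = 0 := by
      rw [← hassoc, hassoc a b (ng b), hn b, az, hn a]
    exact (nuniq _ _ h).symm
  have neg0 : ng (0 : K) = 0 := (nuniq 0 0 (az 0)).symm
  refine ⟨?_, fun a => ⟨ng a, hn a⟩⟩
  -- m = -1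
  obtain ⟨m, hm⟩ : ∃ m : K, 1 + m = 0 := ⟨ng 1, hn 1⟩
  have hm' : m + 1 = 0 := NearDomain.add_eq_zero_symm _ _ hm
  have hmx : ∀ x : K, m * x = ng x := by
    intro x
    have h := rd 1 m x
    rw [hm, zm, om] at h
    exact nuniq x (m * x) h.symm
  by_cases hc : (1 : K) + 1 = 0
  · -- characteristic two: every element is its own negative
    have hxx : ∀ x : K, x + x = 0 := by
      intro x
      have h := rd 1 1 x
      rw [hc, zm, om] at h
      exact h.symm
    have hself : ∀ x : K, ng x = x := fun x => (nuniq x x (hxx x)).symm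
    intro a b
    calc a + b = ng (a + b) := (hself _).symm
      _ = ng b + ng a := nar a b
      _ = b + a := by rw [hself, hself]
  · have hm1 : m ≠ 1 := by intro h; rw [h] at hm; exact hc hm
    have negm1 : ng m = 1 := (nuniq m 1 hm').symm
    have hmm1 : m * m = 1 := (hmx m).trans negm1
    have ngm : ∀ x t : K, ng x * t = ng (x * t) := by
      intro x t
      rw [← hmx x, ma, hmx]
    -- the map θ x = -x + x*m is injective
    have tinj : ∀ x y : K, ng x + x * m = ng y + y * m → x = y := by
      intro x y h
      have e1 : y + (ng x + x * m) = y + (ng y + y * m) := by rw [h]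
      rw [← hassoc, ← hassoc, hn y, za] at e1
      have h3 : (y + ng x) * m + x * m = y * m := by
        rw [← rd, hassoc, hn' x, az]
      have h4 : y + ng x = (y + ng x) * m := rcancel (x * m) _ _ (e1.trans h3.symm)
      by_cases hz : y + ng x = 0
      · have hng : ng x = ng y := lcancel y _ _ (hz.trans (hn y).symm)
        have h5 := congrArg ng hng
        rw [nn, nn] at h5
        exact h5
      · exfalso
        apply hm1
        have h5 : (y + ng x)⁻¹ * ((y + ng x) * m) = (y + ng x)⁻¹ * (y + ng x) := by
          rw [← h4]
        rw [← ma, NearDomain.inv_mul_cancel _ hz, om] at h5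
        exact h5
    -- θ x always commutes with m
    have Pt : ∀ x : K, (ng x + x * m) * m = m * (ng x + x * m) := by
      intro x
      have L : (ng x + x * m) * m = ng (x * m) + x := by
        rw [rd, ngm, ma, hmm1, m1]
      have R : m * (ng x + x * m) = ng (x * m) + x := by
        rw [hmx, nar, nn]
      rw [L, R]
    have h2m : ((1 : K) + 1) * m = m + m := by rw [rd, om]
    have hgm : (((1 : K) + 1) * m) * m = 1 + 1 := by rw [ma, hmm1, m1]
    have hmg : m * (((1 : K) + 1) * m) = 1 + 1 := by rw [hmx, h2m, nar, negm1]
    have commg : (((1 : K) + 1) * m) * m = m * (((1 : K) + 1) * m) := hgm.trans hmg.symm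
    have hg0 : ((1 : K) + 1) * m ≠ 0 := by
      intro h
      have h2 : (((1 : K) + 1) * m) * m = 0 * m := by rw [h]
      rw [ma, hmm1, m1, zm] at h2
      exact hc h2
    have hginv : m * (((1 : K) + 1) * m)⁻¹ = (((1 : K) + 1) * m)⁻¹ * m :=
      nd_inv_comm hg0 commg
    -- on elements commuting with m, θ is left multiplication by (1+1)*m
    have tN : ∀ g : K, g * m = m * g → ng g + g * m = (((1 : K) + 1) * m) * g := by
      intro g hg
      rw [← hmx g, hg, ← rd, h2m]
    -- main step: every element commutes with m
    have main : ∀ x : K, x * m = m * x := by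
      intro x
      by_cases h0 : ng x + x * m = 0
      · have hx0 : x = 0 := by
          apply tinj x 0
          rw [h0, zm, az]
          exact neg0.symm
        rw [hx0, zm, mz]
      · have hPn := Pt x
        have hPg : ((((1 : K) + 1) * m)⁻¹ * (ng x + x * m)) * m
            = m * ((((1 : K) + 1) * m)⁻¹ * (ng x + x * m)) := by
          rw [ma, hPn, ← ma, ← hginv, ma]
        have htg : ng ((((1 : K) + 1) * m)⁻¹ * (ng x + x * m))
            + ((((1 : K) + 1) * m)⁻¹ * (ng x + x * m)) * m = ng x + x * m := by
          rw [tN _ hPg, ← ma, NearDomain.mul_inv_cancel _ hg0, om]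
        have hgx := tinj _ x htg
        rw [hgx] at hPg
        exact hPg
    have negmul : ∀ z : K, z * m = ng z := fun z => (main z).trans (hmx z)
    have negcomm : ∀ u v : K, ng u + ng v = ng v + ng u := by
      intro u v
      have e1 : ng (u + v) = ng u + ng v := by
        rw [← negmul (u + v), rd, negmul u, negmul v]
      exact e1.symm.trans (nar u v)
    intro a b
    have h := negcomm (ng a) (ng b)
    rw [nn, nn] at h
    exact h
end
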